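/- arXiv:2105.14320 — 3 statements merged into one kernel-verified Lean document; each statement's English description precedes it below -/
import Mathlib

section
/- For every real third-order tensor A of size n1 × n2 × n3 there exist tensors U of size n1 × n1 × n3 and V of size n2 × n2 × n3 and a tensor S of size n1 × n2 × n3 such that A = U * S * V^H, where U and V are orthogonal with respect to the t-product (U * U^H = U^H * U = I and V * V^H = V^H * V = I for the identity tensor I) and S is f-diagonal (every frontal slice S(:,:,k) is a diagonal matrix). (t-SVD existence, Theorem 1 of the paper.) -/
/-- Circular convolution of two tubes in `ℝ^{n3}`, indexed by `ZMod n3`. -/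
def circConv {n3 : ℕ} [NeZero n3] (a b : ZMod n3 → ℝ) : ZMod n3 → ℝ :=
  fun k => ∑ j : ZMod n3, a j * b (k - j)

/-- The t-product of third-order tensors: the `(i,j)`-th tube of `A * B` is the sum over `l`
of the circular convolutions of the `(i,l)`-th tube of `A` with the `(l,j)`-th tube of `B`. -/
def tProd {n1 n2 n4 n3 : ℕ} [NeZero n3]
    (A : Fin n1 → Fin n2 → ZMod n3 → ℝ) (B : Fin n2 → Fin n4 → ZMod n3 → ℝ) :
    Fin n1 → Fin n4 → ZMod n3 → ℝ :=
  fun i j k => ∑ l : Fin n2, circConv (A i l) (B l j) k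

/-- The conjugate transpose of a real third-order tensor: the first frontal slice is
transposed, and the `k`-th slice (for `k ≠ 0` in `ZMod n3`) is the transpose of the
`(n3 + 2 - k)`-th slice, i.e. of the `(-k)`-th slice in `ZMod n3` indexing. -/
def conjT {n1 n2 n3 : ℕ} [NeZero n3] (A : Fin n1 → Fin n2 → ZMod n3 → ℝ) :
    Fin n2 → Fin n1 → ZMod n3 → ℝ :=
  fun i j k => A j i (-k)

/-- The identity tensor: the first frontal slice is the identity matrix and all other
frontal slices are zero. -/
def idT (n n3 : ℕ) [NeZero n3] : Fin n → Fin n → ZMod n3 → ℝ :=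
  fun i j k => if i = j ∧ k = 0 then 1 else 0

/-- A tensor is orthogonal w.r.t. the t-product if `Q * Qᴴ = Qᴴ * Q = I`. -/
def orthT {n n3 : ℕ} [NeZero n3] (Q : Fin n → Fin n → ZMod n3 → ℝ) : Prop :=
  tProd Q (conjT Q) = idT n n3 ∧ tProd (conjT Q) Q = idT n n3

/-- A tensor is f-diagonal if every frontal slice is a diagonal matrix. -/
def fDiag {n1 n2 n3 : ℕ} [NeZero n3] (S : Fin n1 → Fin n2 → ZMod n3 → ℝ) : Prop :=
  ∀ (k : ZMod n3) (i : Fin n1) (j : Fin n2), (i : ℕ) ≠ (j : ℕ) → S i j k = 0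



open Matrix RCLike Finset

variable {𝕜 : Type*} [RCLike 𝕜]

theorem matrix_svd_exists {m n : ℕ} (M : Matrix (Fin m) (Fin n) 𝕜) :
    ∃ (U : Matrix (Fin m) (Fin m) 𝕜) (S : Matrix (Fin m) (Fin n) 𝕜)
      (V : Matrix (Fin n) (Fin n) 𝕜),
      U * Uᴴ = 1 ∧ Uᴴ * U = 1 ∧ V * Vᴴ = 1 ∧ Vᴴ * V = 1 ∧
      (∀ (i : Fin m) (j : Fin n), (i : ℕ) ≠ (j : ℕ) → S i j = 0) ∧ M = U * S * Vᴴ := by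
  classical
  have hH : (Mᴴ * M).IsHermitian := isHermitian_conjTranspose_mul_self M
  set W : Matrix (Fin n) (Fin n) 𝕜 := (hH.eigenvectorUnitary : Matrix (Fin n) (Fin n) 𝕜) with hW
  have hWsW : Wᴴ * W = 1 := by
    simpa [star_eq_conjTranspose] using hH.eigenvectorUnitary.2.1
  have hWWs : W * Wᴴ = 1 := by
    simpa [star_eq_conjTranspose] using hH.eigenvectorUnitary.2.2
  set μ : Fin n → ℝ := hH.eigenvalues with hμ
  have hspec : Wᴴ * (Mᴴ * M) * W = diagonal (RCLike.ofReal ∘ μ) := by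
    simpa [star_eq_conjTranspose] using hH.conjStarAlgAut_star_eigenvectorUnitary
  set B : Matrix (Fin m) (Fin n) 𝕜 := M * W with hB
  have hBB : Bᴴ * B = diagonal (RCLike.ofReal ∘ μ) := by
    rw [hB, conjTranspose_mul, ← hspec]
    simp only [Matrix.mul_assoc]
  -- entrywise orthogonality of columns of B
  have hcol : ∀ j j' : Fin n, (∑ i : Fin m, (starRingEnd 𝕜) (B i j) * B i j')
      = if j = j' then (RCLike.ofReal (μ j) : 𝕜) else 0 := by
    intro j j'
    have := congrFun (congrFun hBB j) j'
    simpa [Matrix.mul_apply, conjTranspose_apply, diagonal_apply, eq_comm] using this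
  have hcol_sq : ∀ j : Fin n, (RCLike.ofReal (μ j) : 𝕜) = RCLike.ofReal (∑ i : Fin m, ‖B i j‖ ^ 2) := by
    intro j
    rw [← (if_pos rfl : _ = (RCLike.ofReal (μ j) : 𝕜)), ← hcol j j]
    push_cast
    exact Finset.sum_congr rfl fun i _ => (RCLike.conj_mul (B i j))
  have hμnonneg : ∀ j, 0 ≤ μ j := by
    intro j
    have := hcol_sq j
    have h2 : μ j = ∑ i : Fin m, ‖B i j‖ ^ 2 := by
      exact_mod_cast this
    rw [h2]
    exact Finset.sum_nonneg fun i _ => sq_nonneg _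
  -- zero eigenvalue means zero column
  have hzerocol : ∀ j : Fin n, μ j = 0 → ∀ i, B i j = 0 := by
    intro j hj i
    have := hcol_sq j
    rw [hj] at this
    norm_cast at this
    have hsum : (∑ i : Fin m, ‖B i j‖ ^ 2) = 0 := by exact_mod_cast this.symm
    have : ‖B i j‖ ^ 2 = 0 :=
      (Finset.sum_eq_zero_iff_of_nonneg (fun i _ => sq_nonneg _)).mp hsum i (Finset.mem_univ i)
    simpa using pow_eq_zero_iff (n := 2) (by norm_num) |>.mp this
  -- sort eigenvalues in decreasing order
  set π : Equiv.Perm (Fin n) := Tuple.sort (fun j => -μ j) with hπ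
  have hanti : Antitone (μ ∘ π) := by
    intro a b hab
    have := Tuple.monotone_sort (fun j => -μ j) hab
    simpa using this
  set σ : Fin n → ℝ := μ ∘ π with hσ
  set r : ℕ := (Finset.univ.filter fun j : Fin n => σ j ≠ 0).card with hr
  have hsupp : ∀ j : Fin n, σ j ≠ 0 ↔ (j : ℕ) < r := by
    have hdc : ∀ a b : Fin n, a ≤ b → σ b ≠ 0 → σ a ≠ 0 := by
      intro a b hab hb
      have h1 : 0 < σ b := lt_of_le_of_ne (hμnonneg (π b)) (Ne.symm hb)
      have h2 : σ b ≤ σ a := hanti hab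
      exact ne_of_gt (lt_of_lt_of_le h1 h2)
    intro j
    constructor
    · intro hj
      have hsub : Finset.Iic j ⊆ Finset.univ.filter fun j : Fin n => σ j ≠ 0 := by
        intro a ha
        simp only [Finset.mem_filter, Finset.mem_univ, true_and]
        exact hdc a j (Finset.mem_Iic.mp ha) hj
      have := Finset.card_le_card hsub
      rw [Fin.card_Iic] at this
      omega
    · intro hj
      by_contra hzero
      
      have hsub : (Finset.univ.filter fun j : Fin n => σ j ≠ 0) ⊆ Finset.Iio j := by
        intro a ha
        simp only [Finset.mem_filter, Finset.mem_univ, true_and] at ha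
        rw [Finset.mem_Iio]
        by_contra hle
        push_neg at hle
        exact (hdc j a hle ha) hzero
      have := Finset.card_le_card hsub
      rw [Fin.card_Iio] at this
      omega
  have hrn : r ≤ n := by
    rw [hr]
    exact le_trans (Finset.card_filter_le _ _) (by simp)
  -- the normalized nonzero columns of B (in sorted order) are orthonormal
  set c : Fin n → EuclideanSpace 𝕜 (Fin m) :=
    fun j => (WithLp.equiv 2 _).symm (fun i => B i (π j)) with hc
  have hinner_c : ∀ j j' : Fin n,
      (inner 𝕜 (c j) (c j') : 𝕜) = if j = j' then (RCLike.ofReal (σ j) : 𝕜) else 0 := by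
    intro j j'
    rw [PiLp.inner_apply]
    simp only [RCLike.inner_apply, hc, WithLp.equiv_symm_apply, WithLp.ofLp_toLp, mul_comm (B _ _)]
    rw [hcol (π j) (π j')]
    simp [hσ, EmbeddingLike.apply_eq_iff_eq]
  set w : Fin n → EuclideanSpace 𝕜 (Fin m) :=
    fun j => ((RCLike.ofReal (Real.sqrt (σ j)) : 𝕜))⁻¹ • c j with hw'
  have hinner_w : ∀ j j' : Fin n, σ j ≠ 0 → σ j' ≠ 0 →
      (inner 𝕜 (w j) (w j') : 𝕜) = if j = j' then 1 else 0 := by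
    intro j j' hj hj'
    rw [hw']
    simp only [inner_smul_left, inner_smul_right, hinner_c j j', map_inv₀, RCLike.conj_ofReal]
    by_cases h : j = j'
    · subst h
      simp only [if_pos rfl]
      have hs : (Real.sqrt (σ j)) ≠ 0 :=
        Real.sqrt_ne_zero'.mpr (lt_of_le_of_ne (hμnonneg (π j)) (Ne.symm hj))
      have hs' : (RCLike.ofReal (Real.sqrt (σ j)) : 𝕜) ≠ 0 := by simpa using hs
      field_simp
      norm_cast
      simp [Real.sq_sqrt (show (0:ℝ) ≤ σ j from hμnonneg (π j))]
    · simp [h]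
  have hrm : r ≤ m := by
    have horth : Orthonormal 𝕜 (fun j : {j : Fin n // σ j ≠ 0} => w j) := by
      rw [orthonormal_iff_ite]
      intro a b
      rw [hinner_w a.1 b.1 a.2 b.2]
      simp [Subtype.ext_iff]
    have hli := horth.linearIndependent
    have hcard := hli.fintype_card_le_finrank
    rwa [finrank_euclideanSpace_fin, Fintype.card_subtype, ← hr] at hcard
  -- extend to an orthonormal basis of 𝕜^m
  set v : Fin m → EuclideanSpace 𝕜 (Fin m) :=
    fun i => if h : (i : ℕ) < r then w ⟨(i : ℕ), lt_of_lt_of_le h hrn⟩ else 0 with hv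
  have horthv : Orthonormal 𝕜 (Set.restrict {i : Fin m | (i : ℕ) < r} v) := by
    rw [orthonormal_iff_ite]
    rintro ⟨a, ha⟩ ⟨b, hb⟩
    have ha' : (a : ℕ) < r := ha
    have hb' : (b : ℕ) < r := hb
    simp only [Set.restrict, Set.domRestrict_apply, hv]
    rw [dif_pos ha', dif_pos hb']
    rw [hinner_w _ _ ((hsupp _).mpr ha') ((hsupp _).mpr hb')]
    simp [Fin.ext_iff, Subtype.ext_iff]
  obtain ⟨bas, hbas⟩ := horthv.exists_orthonormalBasis_extension_of_card_eq
    (by simp [finrank_euclideanSpace_fin]) (v := v)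
  set U : Matrix (Fin m) (Fin m) 𝕜 := Matrix.of fun i k => bas k i with hU
  have hUU : Uᴴ * U = 1 := by
    ext k k'
    rw [Matrix.mul_apply, Matrix.one_apply]
    simp only [conjTranspose_apply, hU, Matrix.of_apply, star_def]
    have := (orthonormal_iff_ite.mp bas.orthonormal) k k'
    rw [PiLp.inner_apply] at this
    simpa [RCLike.inner_apply, mul_comm] using this
  have hUUs : U * Uᴴ = 1 := mul_eq_one_comm.mp hUU
  set S : Matrix (Fin m) (Fin n) 𝕜 := Matrix.of fun (i : Fin m) (j : Fin n) =>
    if (i : ℕ) = (j : ℕ) then (RCLike.ofReal (Real.sqrt (σ j)) : 𝕜) else 0 with hS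
  set V : Matrix (Fin n) (Fin n) 𝕜 := Matrix.of fun i j => W i (π j) with hV
  have hVV : Vᴴ * V = 1 := by
    ext j j'
    rw [Matrix.mul_apply, Matrix.one_apply]
    have := congrFun (congrFun hWsW (π j)) (π j')
    rw [Matrix.mul_apply, Matrix.one_apply] at this
    simp only [conjTranspose_apply] at this
    simp only [conjTranspose_apply, hV, Matrix.of_apply]
    rw [this]
    simp [EmbeddingLike.apply_eq_iff_eq]
  have hVVs : V * Vᴴ = 1 := mul_eq_one_comm.mp hVV
  have hkey : M * V = U * S := by
    ext i j
    have hlhs : (M * V) i j = B i (π j) := by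
      rw [Matrix.mul_apply, hB, Matrix.mul_apply]
      simp [hV]
    rw [hlhs, Matrix.mul_apply]
    by_cases hσj : σ j = 0
    · rw [hzerocol (π j) hσj i]
      refine (Finset.sum_eq_zero fun k _ => ?_).symm
      simp [hS, hσj]
    · have hjr : (j : ℕ) < r := (hsupp j).mp hσj
      have hjm : (j : ℕ) < m := lt_of_lt_of_le hjr hrm
      set k₀ : Fin m := ⟨(j : ℕ), hjm⟩ with hk₀
      have hbk : bas k₀ = w j := by
        have hk0s : k₀ ∈ {i : Fin m | (i : ℕ) < r} := hjr
        rw [hbas k₀ hk0s, hv]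
        simp only
        rw [dif_pos (show ((k₀ : ℕ) < r) from hjr)]
      rw [Finset.sum_eq_single k₀]
      · show B i (π j) = bas k₀ i * S k₀ j
        rw [hbk]
        have happ : w j i = ((RCLike.ofReal (Real.sqrt (σ j)) : 𝕜))⁻¹ * B i (π j) := rfl
        have hSval : S k₀ j = (RCLike.ofReal (Real.sqrt (σ j)) : 𝕜) := by
          simp [hS, hk₀]
        rw [happ, hSval]
        have hsqrt : (RCLike.ofReal (Real.sqrt (σ j)) : 𝕜) ≠ 0 := by
          simp only [ne_eq, RCLike.ofReal_eq_zero]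
          exact Real.sqrt_ne_zero'.mpr (lt_of_le_of_ne (hμnonneg (π j)) (Ne.symm hσj))
        field_simp
      · intro k _ hk
        have hne : (k : ℕ) ≠ (j : ℕ) := fun h => hk (Fin.ext h)
        simp [hS, hne]
      · intro h
        exact absurd (Finset.mem_univ k₀) h
  have hfin : M = (M * V) * Vᴴ := by
    rw [Matrix.mul_assoc, hVVs, Matrix.mul_one]
  exact ⟨U, S, V, hUUs, hUU, hVVs, hVV, fun i j hij => by simp [hS, hij],
    by rw [hfin, hkey]⟩

open ZMod Complex Finset Matrix

variable {N : ℕ} [NeZero N]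

lemma conj_stdAddChar (x : ZMod N) :
    (starRingEnd ℂ) (stdAddChar x) = stdAddChar (-x) := by
  rw [AddChar.map_neg_eq_inv, stdAddChar_apply, ← Circle.coe_inv, Circle.coe_inv_eq_conj]

/-- Frequency-domain matrices of a real tensor. -/
noncomputable def matHat {a b : ℕ} (X : Fin a → Fin b → ZMod N → ℝ) :
    ZMod N → Matrix (Fin a) (Fin b) ℂ :=
  fun j => Matrix.of fun i i' => ZMod.dft (fun k => ((X i i' k : ℝ) : ℂ)) j

lemma matHat_inj {a b : ℕ} (X Y : Fin a → Fin b → ZMod N → ℝ)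
    (h : ∀ j, matHat X j = matHat Y j) : X = Y := by
  funext i i' k
  have h2 : ZMod.dft (fun k => ((X i i' k : ℝ) : ℂ))
      = ZMod.dft (fun k => ((Y i i' k : ℝ) : ℂ)) := by
    funext j
    exact congrFun (congrFun (h j) i) i'
  have h3 := ZMod.dft.injective h2
  exact_mod_cast congrFun h3 k

lemma dft_circConv (a b : ZMod N → ℝ) (j : ZMod N) :
    ZMod.dft (fun k => ((circConv a b k : ℝ) : ℂ)) j
      = ZMod.dft (fun k => ((a k : ℝ) : ℂ)) j * ZMod.dft (fun k => ((b k : ℝ) : ℂ)) j := by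
  simp only [ZMod.dft_apply, smul_eq_mul, circConv]
  push_cast
  calc ∑ k : ZMod N, stdAddChar (-(k * j)) * ∑ m : ZMod N, (a m : ℂ) * (b (k - m) : ℂ)
      = ∑ k : ZMod N, ∑ m : ZMod N, stdAddChar (-(k * j)) * ((a m : ℂ) * (b (k - m) : ℂ)) := by
        simp_rw [Finset.mul_sum]
    _ = ∑ m : ZMod N, ∑ k : ZMod N, stdAddChar (-(k * j)) * ((a m : ℂ) * (b (k - m) : ℂ)) :=
        Finset.sum_comm
    _ = ∑ m : ZMod N, ∑ t : ZMod N, stdAddChar (-((m + t) * j)) * ((a m : ℂ) * (b t : ℂ)) := by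
        refine Finset.sum_congr rfl fun m _ => ?_
        refine (Fintype.sum_equiv (Equiv.addLeft m) _ _ fun t => ?_).symm
        simp [add_sub_cancel_left]
    _ = (∑ k : ZMod N, stdAddChar (-(k * j)) * (a k : ℂ))
          * ∑ k : ZMod N, stdAddChar (-(k * j)) * (b k : ℂ) := by
        rw [Finset.sum_mul_sum]
        refine Finset.sum_congr rfl fun m _ => Finset.sum_congr rfl fun t _ => ?_
        rw [show -((m + t) * j) = -(m * j) + -(t * j) by ring, AddChar.map_add_eq_mul]
        ring

lemma dft_real_conj (f : ZMod N → ℝ) (j : ZMod N) :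
    (starRingEnd ℂ) (ZMod.dft (fun k => ((f k : ℝ) : ℂ)) j)
      = ZMod.dft (fun k => ((f k : ℝ) : ℂ)) (-j) := by
  simp only [ZMod.dft_apply, smul_eq_mul, map_sum]
  refine Finset.sum_congr rfl fun k _ => ?_
  rw [_root_.map_mul, conj_stdAddChar, Complex.conj_ofReal, neg_neg,
    show -(k * -j) = k * j by ring]

lemma dft_realize (Ψ : ZMod N → ℂ) (hsym : ∀ j, Ψ (-j) = (starRingEnd ℂ) (Ψ j)) :
    ZMod.dft (fun k => (((ZMod.dft.symm Ψ k).re : ℝ) : ℂ)) = Ψ := by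
  have hreal : ∀ k, (((ZMod.dft.symm Ψ k).re : ℝ) : ℂ) = ZMod.dft.symm Ψ k := by
    intro k
    have hconj : (starRingEnd ℂ) (ZMod.dft.symm Ψ k) = ZMod.dft.symm Ψ k := by
      rw [ZMod.invDFT_apply]
      simp only [smul_eq_mul, _root_.map_mul, map_sum, map_inv₀, map_natCast]
      congr 1
      calc ∑ j : ZMod N, (starRingEnd ℂ) (stdAddChar (j * k)) * (starRingEnd ℂ) (Ψ j)
          = ∑ j : ZMod N, stdAddChar (-j * k) * Ψ (-j) := by
            refine Finset.sum_congr rfl fun j _ => ?_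
            rw [conj_stdAddChar, ← hsym j]
            ring_nf
        _ = ∑ j : ZMod N, stdAddChar (j * k) * Ψ j := by
            refine Fintype.sum_equiv (Equiv.neg _) _ _ fun j => ?_
            simp
    rw [Complex.conj_eq_iff_re.mp hconj]
  rw [show (fun k => (((ZMod.dft.symm Ψ k).re : ℝ) : ℂ)) = ZMod.dft.symm Ψ from funext hreal]
  exact ZMod.dft.apply_symm_apply Ψ

lemma matHat_tProd {a b d : ℕ} (X : Fin a → Fin b → ZMod N → ℝ)
    (Y : Fin b → Fin d → ZMod N → ℝ) (j : ZMod N) :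
    matHat (tProd X Y) j = matHat X j * matHat Y j := by
  ext i i'
  have h1 : (fun k => (((tProd X Y) i i' k : ℝ) : ℂ))
      = ∑ l : Fin b, (fun k => ((circConv (X i l) (Y l i') k : ℝ) : ℂ)) := by
    funext k
    simp only [tProd, Finset.sum_apply]
    push_cast
    rfl
  simp only [matHat, Matrix.of_apply, Matrix.mul_apply]
  rw [h1, map_sum, Finset.sum_apply]
  exact Finset.sum_congr rfl fun l _ => dft_circConv (X i l) (Y l i') j

lemma matHat_conjT {a b : ℕ} (X : Fin a → Fin b → ZMod N → ℝ) (j : ZMod N) :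
    matHat (conjT X) j = (matHat X j)ᴴ := by
  ext i i'
  simp only [matHat, Matrix.of_apply, conjTranspose_apply, conjT, star_def]
  rw [dft_real_conj]
  exact congrFun (ZMod.dft_comp_neg (fun k => ((X i' i k : ℝ) : ℂ))) j

lemma matHat_idT {a : ℕ} (j : ZMod N) : matHat (idT a N) j = 1 := by
  ext i i'
  simp only [matHat, Matrix.of_apply, idT, ZMod.dft_apply, smul_eq_mul, Matrix.one_apply]
  by_cases h : i = i'
  · subst h
    simp only [if_pos rfl, true_and]
    rw [Finset.sum_eq_single (0 : ZMod N)]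
    · simp
    · intro k _ hk
      simp [hk]
    · intro h
      exact absurd (Finset.mem_univ _) h
  · simp [h]

lemma map_conj_conj {p q : ℕ} (X : Matrix (Fin p) (Fin q) ℂ) :
    (X.map (starRingEnd ℂ)).map (starRingEnd ℂ) = X := by
  ext i j; simp [Matrix.map_apply]

lemma conjTranspose_map_conj {p q : ℕ} (X : Matrix (Fin p) (Fin q) ℂ) :
    (X.map (starRingEnd ℂ))ᴴ = Xᴴ.map (starRingEnd ℂ) :=
  (Matrix.conjTranspose_map _ (fun z => rfl)).symm

lemma map_mul_conj {p q s : ℕ} (X : Matrix (Fin p) (Fin q) ℂ) (Y : Matrix (Fin q) (Fin s) ℂ) :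
    (X * Y).map (starRingEnd ℂ) = X.map (starRingEnd ℂ) * Y.map (starRingEnd ℂ) :=
  Matrix.map_mul (f := starRingEnd ℂ)

lemma map_one_conj {p : ℕ} : ((1 : Matrix (Fin p) (Fin p) ℂ)).map (starRingEnd ℂ) = 1 :=
  Matrix.map_one _ (map_zero _) (map_one _)

lemma svd_map_conj {a b : ℕ} {M : Matrix (Fin a) (Fin b) ℂ}
    {U : Matrix (Fin a) (Fin a) ℂ} {S : Matrix (Fin a) (Fin b) ℂ} {V : Matrix (Fin b) (Fin b) ℂ}
    (h1 : U * Uᴴ = 1) (h2 : Uᴴ * U = 1) (h3 : V * Vᴴ = 1) (h4 : Vᴴ * V = 1)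
    (h5 : ∀ (i : Fin a) (j : Fin b), (i : ℕ) ≠ (j : ℕ) → S i j = 0) (h6 : M = U * S * Vᴴ) :
    (U.map (starRingEnd ℂ)) * (U.map (starRingEnd ℂ))ᴴ = 1 ∧
    (U.map (starRingEnd ℂ))ᴴ * (U.map (starRingEnd ℂ)) = 1 ∧
    (V.map (starRingEnd ℂ)) * (V.map (starRingEnd ℂ))ᴴ = 1 ∧
    (V.map (starRingEnd ℂ))ᴴ * (V.map (starRingEnd ℂ)) = 1 ∧
    (∀ (i : Fin a) (j : Fin b), (i : ℕ) ≠ (j : ℕ) → (S.map (starRingEnd ℂ)) i j = 0) ∧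
    M.map (starRingEnd ℂ)
      = (U.map (starRingEnd ℂ)) * (S.map (starRingEnd ℂ)) * (V.map (starRingEnd ℂ))ᴴ := by
  refine ⟨?_, ?_, ?_, ?_, ?_, ?_⟩
  · rw [conjTranspose_map_conj, ← map_mul_conj, h1, map_one_conj]
  · rw [conjTranspose_map_conj, ← map_mul_conj, h2, map_one_conj]
  · rw [conjTranspose_map_conj, ← map_mul_conj, h3, map_one_conj]
  · rw [conjTranspose_map_conj, ← map_mul_conj, h4, map_one_conj]
  · intro i j hij; simp [Matrix.map_apply, h5 i j hij]
  · rw [h6, map_mul_conj, map_mul_conj, conjTranspose_map_conj]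

lemma matrix_svd_real {a b : ℕ} (M : Matrix (Fin a) (Fin b) ℂ)
    (hM : M.map (starRingEnd ℂ) = M) :
    ∃ (U : Matrix (Fin a) (Fin a) ℂ) (S : Matrix (Fin a) (Fin b) ℂ)
      (V : Matrix (Fin b) (Fin b) ℂ),
      (U * Uᴴ = 1 ∧ Uᴴ * U = 1 ∧ V * Vᴴ = 1 ∧ Vᴴ * V = 1 ∧
        (∀ (i : Fin a) (j : Fin b), (i : ℕ) ≠ (j : ℕ) → S i j = 0) ∧ M = U * S * Vᴴ) ∧
      U.map (starRingEnd ℂ) = U ∧ S.map (starRingEnd ℂ) = S ∧ V.map (starRingEnd ℂ) = V := by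
  obtain ⟨Ur, Sr, Vr, h1, h2, h3, h4, h5, h6⟩ := matrix_svd_exists (𝕜 := ℝ) (M.map Complex.re)
  have hMr : (M.map Complex.re).map (Complex.ofRealHom : ℝ →+* ℂ) = M := by
    ext i j
    have := congrFun (congrFun hM i) j
    simp only [Matrix.map_apply] at this ⊢
    exact Complex.conj_eq_iff_re.mp this
  have hsemi : Function.Semiconj (Complex.ofRealHom : ℝ → ℂ) star star := fun x => by
    simp [Complex.conj_ofReal]
  have hct : ∀ {p q : ℕ} (X : Matrix (Fin p) (Fin q) ℝ),
      (X.map (Complex.ofRealHom : ℝ →+* ℂ))ᴴ = Xᴴ.map (Complex.ofRealHom : ℝ →+* ℂ) :=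
    fun X => (Matrix.conjTranspose_map _ hsemi).symm
  have hmul : ∀ {p q s : ℕ} (X : Matrix (Fin p) (Fin q) ℝ) (Y : Matrix (Fin q) (Fin s) ℝ),
      (X * Y).map (Complex.ofRealHom : ℝ →+* ℂ)
        = X.map (Complex.ofRealHom : ℝ →+* ℂ) * Y.map (Complex.ofRealHom : ℝ →+* ℂ) :=
    fun X Y => Matrix.map_mul (f := Complex.ofRealHom)
  have hone : ∀ {p : ℕ},
      ((1 : Matrix (Fin p) (Fin p) ℝ)).map (Complex.ofRealHom : ℝ →+* ℂ) = 1 :=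
    fun {p} => Matrix.map_one _ (map_zero _) (map_one _)
  have hselfconj : ∀ {p q : ℕ} (X : Matrix (Fin p) (Fin q) ℝ),
      (X.map (Complex.ofRealHom : ℝ →+* ℂ)).map (starRingEnd ℂ)
        = X.map (Complex.ofRealHom : ℝ →+* ℂ) := by
    intro p q X; ext i j; simp [Matrix.map_apply, Complex.conj_ofReal]
  refine ⟨Ur.map Complex.ofRealHom, Sr.map Complex.ofRealHom, Vr.map Complex.ofRealHom,
    ⟨?_, ?_, ?_, ?_, ?_, ?_⟩, hselfconj Ur, hselfconj Sr, hselfconj Vr⟩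
  · rw [hct, ← hmul, h1, hone]
  · rw [hct, ← hmul, h2, hone]
  · rw [hct, ← hmul, h3, hone]
  · rw [hct, ← hmul, h4, hone]
  · intro i j hij; simp [Matrix.map_apply, h5 i j hij]
  · rw [← hMr, h6, hmul, hmul, hct]

lemma zmod_pair1 {N : ℕ} [NeZero N] (j : ZMod N) (h : ¬ 2 * j.val ≤ N) :
    2 * (-j).val ≤ N := by
  have hj0 : j ≠ 0 := by
    intro h0; subst h0; simp [ZMod.val_zero] at h
  rw [ZMod.neg_val, if_neg hj0]
  have := ZMod.val_lt j
  omega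

lemma zmod_pair2 {N : ℕ} [NeZero N] (j : ZMod N) (h1 : 2 * j.val ≤ N)
    (h2 : 2 * (-j).val ≤ N) : -j = j := by
  by_cases hj0 : j = 0
  · subst hj0; simp
  · rw [ZMod.neg_val, if_neg hj0] at h2
    have hlt := ZMod.val_lt j
    have hv0 : j.val ≠ 0 := fun h => hj0 (ZMod.val_injective N (by simpa using h))
    apply ZMod.val_injective
    rw [ZMod.neg_val, if_neg hj0]
    omega


/-- t-SVD existence: every real third-order tensor `A` of size `n1 × n2 × n3` factors as
`A = U * S * Vᴴ` with `U`, `V` orthogonal w.r.t. the t-product and `S` f-diagonal. -/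
theorem tSVD_exists {n1 n2 n3 : ℕ} [NeZero n3] (A : Fin n1 → Fin n2 → ZMod n3 → ℝ) :
    ∃ (U : Fin n1 → Fin n1 → ZMod n3 → ℝ) (S : Fin n1 → Fin n2 → ZMod n3 → ℝ)
      (V : Fin n2 → Fin n2 → ZMod n3 → ℝ),
      orthT U ∧ orthT V ∧ fDiag S ∧ A = tProd (tProd U S) (conjT V) := by
  classical
  have hsymA : ∀ j : ZMod n3, matHat A (-j) = (matHat A j).map (starRingEnd ℂ) := by
    intro j; ext i i'
    simp only [matHat, Matrix.of_apply, Matrix.map_apply]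
    exact (dft_real_conj (A i i') j).symm
  have hch : ∀ j : ZMod n3, ∃ (Uh : Matrix (Fin n1) (Fin n1) ℂ)
      (Sh : Matrix (Fin n1) (Fin n2) ℂ) (Vh : Matrix (Fin n2) (Fin n2) ℂ),
      (Uh * Uhᴴ = 1 ∧ Uhᴴ * Uh = 1 ∧ Vh * Vhᴴ = 1 ∧ Vhᴴ * Vh = 1 ∧
        (∀ (i : Fin n1) (i' : Fin n2), (i : ℕ) ≠ (i' : ℕ) → Sh i i' = 0) ∧
        matHat A j = Uh * Sh * Vhᴴ) ∧
      (-j = j → Uh.map (starRingEnd ℂ) = Uh ∧ Sh.map (starRingEnd ℂ) = Sh ∧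
        Vh.map (starRingEnd ℂ) = Vh) := by
    intro j
    by_cases hj : -j = j
    · have hreal : (matHat A j).map (starRingEnd ℂ) = matHat A j := by
        rw [← hsymA j, hj]
      obtain ⟨Uh, Sh, Vh, hp, hcs⟩ := matrix_svd_real (matHat A j) hreal
      exact ⟨Uh, Sh, Vh, hp, fun _ => hcs⟩
    · obtain ⟨Uh, Sh, Vh, p1, p2, p3, p4, p5, p6⟩ := matrix_svd_exists (𝕜 := ℂ) (matHat A j)
      exact ⟨Uh, Sh, Vh, ⟨p1, p2, p3, p4, p5, p6⟩, fun h => absurd h hj⟩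
  choose Uf Sf Vf hch' using hch
  have hprops := fun j => (hch' j).1
  have hself := fun j => (hch' j).2
  set Uh : ZMod n3 → Matrix (Fin n1) (Fin n1) ℂ :=
    fun j => if 2 * j.val ≤ n3 then Uf j else (Uf (-j)).map (starRingEnd ℂ) with hUh
  set Sh : ZMod n3 → Matrix (Fin n1) (Fin n2) ℂ :=
    fun j => if 2 * j.val ≤ n3 then Sf j else (Sf (-j)).map (starRingEnd ℂ) with hSh
  set Vh : ZMod n3 → Matrix (Fin n2) (Fin n2) ℂ :=
    fun j => if 2 * j.val ≤ n3 then Vf j else (Vf (-j)).map (starRingEnd ℂ) with hVh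
  -- conjugation symmetry of the selected frequency-domain factors
  have pairing : ∀ {p q : ℕ} (f : ZMod n3 → Matrix (Fin p) (Fin q) ℂ),
      (∀ j, -j = j → (f j).map (starRingEnd ℂ) = f j) → ∀ j : ZMod n3,
      (if 2 * (-j).val ≤ n3 then f (-j) else (f (-(-j))).map (starRingEnd ℂ))
        = (if 2 * j.val ≤ n3 then f j else (f (-j)).map (starRingEnd ℂ)).map (starRingEnd ℂ) := by
    intro p q f hf j
    by_cases hsel : -j = j
    · rw [hsel]
      by_cases hP : 2 * j.val ≤ n3
      · rw [if_pos hP, if_pos hP, hf j hsel]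
      · rw [if_neg hP, if_neg hP, hsel, hf j hsel, hf j hsel]
    · by_cases hP : 2 * j.val ≤ n3
      · have hnP : ¬ 2 * (-j).val ≤ n3 := fun h => hsel (zmod_pair2 j hP h)
        rw [if_neg hnP, if_pos hP, neg_neg]
      · have hnP : 2 * (-j).val ≤ n3 := zmod_pair1 j hP
        rw [if_pos hnP, if_neg hP, map_conj_conj]
  have hUsym : ∀ j : ZMod n3, Uh (-j) = (Uh j).map (starRingEnd ℂ) :=
    fun j => pairing Uf (fun j' hj' => ((hself j') hj').1) j
  have hSsym : ∀ j : ZMod n3, Sh (-j) = (Sh j).map (starRingEnd ℂ) :=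
    fun j => pairing Sf (fun j' hj' => ((hself j') hj').2.1) j
  have hVsym : ∀ j : ZMod n3, Vh (-j) = (Vh j).map (starRingEnd ℂ) :=
    fun j => pairing Vf (fun j' hj' => ((hself j') hj').2.2) j
  -- decomposition properties of the selected factors
  have hdecomp : ∀ j : ZMod n3, Uh j * (Uh j)ᴴ = 1 ∧ (Uh j)ᴴ * Uh j = 1 ∧
      Vh j * (Vh j)ᴴ = 1 ∧ (Vh j)ᴴ * Vh j = 1 ∧
      (∀ (i : Fin n1) (i' : Fin n2), (i : ℕ) ≠ (i' : ℕ) → Sh j i i' = 0) ∧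
      matHat A j = Uh j * Sh j * (Vh j)ᴴ := by
    intro j
    by_cases hP : 2 * j.val ≤ n3
    · simp only [hUh, hSh, hVh, if_pos hP]
      exact hprops j
    · simp only [hUh, hSh, hVh, if_neg hP]
      obtain ⟨p1, p2, p3, p4, p5, p6⟩ := hprops (-j)
      have hmapped := svd_map_conj p1 p2 p3 p4 p5 p6
      have hAj : matHat A j = (matHat A (-j)).map (starRingEnd ℂ) := by
        have := hsymA (-j)
        rwa [neg_neg] at this
      exact ⟨hmapped.1, hmapped.2.1, hmapped.2.2.1, hmapped.2.2.2.1, hmapped.2.2.2.2.1,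
        by rw [hAj, hmapped.2.2.2.2.2]⟩
  -- build the real tensors by inverse DFT
  set Ut : Fin n1 → Fin n1 → ZMod n3 → ℝ :=
    fun i l k => (ZMod.dft.symm (fun j => Uh j i l) k).re with hUt
  set St : Fin n1 → Fin n2 → ZMod n3 → ℝ :=
    fun i l k => (ZMod.dft.symm (fun j => Sh j i l) k).re with hSt
  set Vt : Fin n2 → Fin n2 → ZMod n3 → ℝ :=
    fun i l k => (ZMod.dft.symm (fun j => Vh j i l) k).re with hVt
  have hmatU : ∀ j : ZMod n3, matHat Ut j = Uh j := by
    intro j; ext i l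
    have hsymU : ∀ j' : ZMod n3, (fun j0 => Uh j0 i l) (-j')
        = (starRingEnd ℂ) ((fun j0 => Uh j0 i l) j') := by
      intro j'
      have := congrFun (congrFun (hUsym j') i) l
      simpa [Matrix.map_apply] using this
    exact congrFun (dft_realize _ hsymU) j
  have hmatS : ∀ j : ZMod n3, matHat St j = Sh j := by
    intro j; ext i l
    have hsymS : ∀ j' : ZMod n3, (fun j0 => Sh j0 i l) (-j')
        = (starRingEnd ℂ) ((fun j0 => Sh j0 i l) j') := by
      intro j'
      have := congrFun (congrFun (hSsym j') i) l
      simpa [Matrix.map_apply] using this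
    exact congrFun (dft_realize _ hsymS) j
  have hmatV : ∀ j : ZMod n3, matHat Vt j = Vh j := by
    intro j; ext i l
    have hsymV : ∀ j' : ZMod n3, (fun j0 => Vh j0 i l) (-j')
        = (starRingEnd ℂ) ((fun j0 => Vh j0 i l) j') := by
      intro j'
      have := congrFun (congrFun (hVsym j') i) l
      simpa [Matrix.map_apply] using this
    exact congrFun (dft_realize _ hsymV) j
  refine ⟨Ut, St, Vt, ⟨?_, ?_⟩, ⟨?_, ?_⟩, ?_, ?_⟩
  · apply matHat_inj
    intro j
    rw [matHat_tProd, matHat_conjT, hmatU j, matHat_idT]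
    exact (hdecomp j).1
  · apply matHat_inj
    intro j
    rw [matHat_tProd, matHat_conjT, hmatU j, matHat_idT]
    exact (hdecomp j).2.1
  · apply matHat_inj
    intro j
    rw [matHat_tProd, matHat_conjT, hmatV j, matHat_idT]
    exact (hdecomp j).2.2.1
  · apply matHat_inj
    intro j
    rw [matHat_tProd, matHat_conjT, hmatV j, matHat_idT]
    exact (hdecomp j).2.2.2.1
  · intro k i i' hii
    simp only [hSt]
    have hz : (fun j => Sh j i i') = 0 :=
      funext fun j => (hdecomp j).2.2.2.2.1 i i' hii
    rw [hz, map_zero]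
    simp
  · apply matHat_inj
    intro j
    rw [matHat_tProd, matHat_tProd, matHat_conjT, hmatU j, hmatS j, hmatV j]
    exact (hdecomp j).2.2.2.2.2
end

section
/- The discrete Fourier transform along the third mode converts the t-product into slice-wise matrix products: for tensors A ∈ ℝ^{n1×n2×n3} and B ∈ ℝ^{n2×n4×n3}, and for every k ∈ ZMod n3, the k-th frontal slice of the mode-3 DFT of A * B equals the matrix product of the k-th frontal slice of the mode-3 DFT of A with the k-th frontal slice of the mode-3 DFT of B; here the mode-3 DFT of a tensor X is the complex tensor whose (i,j,k)-th entry is Σ_{t ∈ ZMod n3} X(i,j,t)·ω^{kt} with ω = exp(−2πi/n3). -/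
/-- The mode-3 discrete Fourier transform of a real third-order tensor:
`(dft3 X) i j k = ∑ t, X i j t * exp(-2πi·k·t/n3)`. -/
noncomputable def dft3 {n1 n2 n3 : ℕ} [NeZero n3] (X : Fin n1 → Fin n2 → ZMod n3 → ℝ) :
    Fin n1 → Fin n2 → ZMod n3 → ℂ :=
  fun i j k => ∑ t : ZMod n3,
    (X i j t : ℂ) * Complex.exp (-2 * Real.pi * Complex.I * (k.val * t.val : ℕ) / n3)

noncomputable def fc (n3 : ℕ) (m : ℕ) : ℂ :=
  Complex.exp (-2 * Real.pi * Complex.I * m / n3)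

lemma fc_add (n3 a b : ℕ) : fc n3 (a + b) = fc n3 a * fc n3 b := by
  rw [fc, fc, fc, ← Complex.exp_add]
  congr 1
  push_cast
  ring

lemma fc_per (n3 : ℕ) [NeZero n3] (m c : ℕ) : fc n3 (m + n3 * c) = fc n3 m := by
  rw [fc_add]
  have hn : (n3 : ℂ) ≠ 0 := Nat.cast_ne_zero.mpr (NeZero.ne n3)
  have h1 : fc n3 (n3 * c) = 1 := by
    rw [fc]
    have : -2 * (Real.pi : ℂ) * Complex.I * (↑(n3 * c)) / n3 = (-(c:ℤ)) * (2 * Real.pi * Complex.I) := by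
      push_cast; field_simp
    rw [this]
    simpa using Complex.exp_int_mul_two_pi_mul_I (-(c:ℤ))
  rw [h1, mul_one]

lemma fc_key (n3 : ℕ) [NeZero n3] (k j s : ZMod n3) :
    fc n3 (k.val * (j + s).val) = fc n3 (k.val * j.val) * fc n3 (k.val * s.val) := by
  rw [← fc_add, ← Nat.mul_add]
  have h : (j + s).val = (j.val + s.val) % n3 := ZMod.val_add j s
  have hd : j.val + s.val = (j + s).val + n3 * ((j.val + s.val) / n3) := by
    rw [h]; exact (Nat.mod_add_div _ _).symm
  rw [hd, Nat.mul_add, Nat.mul_left_comm, fc_per]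

lemma conv_dft {n3 : ℕ} [NeZero n3] (a b : ZMod n3 → ℝ) (k : ZMod n3) :
    (∑ t : ZMod n3, ((circConv a b t : ℝ) : ℂ) * fc n3 (k.val * t.val))
      = (∑ t : ZMod n3, (a t : ℂ) * fc n3 (k.val * t.val)) *
        (∑ t : ZMod n3, (b t : ℂ) * fc n3 (k.val * t.val)) := by
  rw [Finset.sum_mul_sum]
  unfold circConv
  push_cast
  simp_rw [Finset.sum_mul]
  rw [Finset.sum_comm]
  refine Finset.sum_congr rfl fun m _ => ?_
  rw [← Equiv.sum_comp (Equiv.addLeft m)]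
  refine Finset.sum_congr rfl fun s _ => ?_
  simp only [Equiv.coe_addLeft]
  rw [add_sub_cancel_left, fc_key]
  ring

/-- The mode-3 DFT converts the t-product into slice-wise matrix products: for every
slice index `k`, the `k`-th frontal slice of `dft3 (A * B)` is the matrix product of the
`k`-th frontal slices of `dft3 A` and `dft3 B`. -/
theorem dft3_tProd {n1 n2 n4 n3 : ℕ} [NeZero n3]
    (A : Fin n1 → Fin n2 → ZMod n3 → ℝ) (B : Fin n2 → Fin n4 → ZMod n3 → ℝ) :
    ∀ (k : ZMod n3) (i : Fin n1) (j : Fin n4),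
      dft3 (tProd A B) i j k = ∑ l : Fin n2, dft3 A i l k * dft3 B l j k := by
  intro k i j
  have hd : ∀ (m1 m2 : ℕ) (X : Fin m1 → Fin m2 → ZMod n3 → ℝ) (i' : Fin m1) (j' : Fin m2),
      dft3 X i' j' k = ∑ t : ZMod n3, (X i' j' t : ℂ) * fc n3 (k.val * t.val) :=
    fun _ _ _ _ _ => rfl
  simp_rw [hd]
  unfold tProd
  push_cast
  simp_rw [Finset.sum_mul]
  rw [Finset.sum_comm]
  refine Finset.sum_congr rfl fun l _ => ?_
  rw [← Finset.sum_mul]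
  exact conv_dft (A i l) (B l j) k
end

section
/- Subgradient of the nuclear norm: let X ∈ ℝ^{m×n} have singular value decomposition X = U Σ Vᵀ with U ∈ ℝ^{m×m}, V ∈ ℝ^{n×n} orthogonal and Σ diagonal with nonnegative diagonal, let r be the number of nonzero singular values of X, and let Ũ ∈ ℝ^{m×r} and Ṽ ∈ ℝ^{n×r} be the matrices formed by the first r columns of U and V (those corresponding to the nonzero singular values). Then Ũ Ṽᵀ is a subgradient of the nuclear norm at X, i.e., for every Y ∈ ℝ^{m×n}, ‖Y‖_* ≥ ‖X‖_* + ⟨Ũ Ṽᵀ, Y − X⟩, where ⟨A,B⟩ = trace(AᵀB). -/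
open Matrix

/-- The nuclear norm of a real matrix: the trace of the positive semidefinite square root
of `Xᵀ X` (i.e. the sum of the singular values of `X`). -/
noncomputable def nuclearNorm {m n : ℕ} (X : Matrix (Fin m) (Fin n) ℝ) : ℝ :=
  ((((Matrix.posSemidef_conjTranspose_mul_self X).1.eigenvectorUnitary : Matrix (Fin n) (Fin n) ℝ) *
      diagonal ((↑) ∘ (fun x => √x) ∘ (Matrix.posSemidef_conjTranspose_mul_self X).1.eigenvalues) *
      (star ((Matrix.posSemidef_conjTranspose_mul_self X).1.eigenvectorUnitary :
        Matrix (Fin n) (Fin n) ℝ))) : Matrix (Fin n) (Fin n) ℝ).trace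

/-- trace of sqrt from an orthogonal diagonalization -/
lemma traceSqrt_of_decomp {n : ℕ} {A : Matrix (Fin n) (Fin n) ℝ} (hA : Matrix.PosSemidef A)
    (W : Matrix (Fin n) (Fin n) ℝ) (hW : Wᵀ * W = 1)
    (d : Fin n → ℝ) (hd : ∀ j, 0 ≤ d j)
    (hAeq : A = W * Matrix.diagonal (fun j => d j ^ 2) * Wᵀ) :
    ((((hA.1.eigenvectorUnitary : Matrix (Fin n) (Fin n) ℝ) *
      diagonal ((↑) ∘ (fun x => √x) ∘ hA.1.eigenvalues) *
      (star (hA.1.eigenvectorUnitary : Matrix (Fin n) (Fin n) ℝ))) :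
        Matrix (Fin n) (Fin n) ℝ).trace) = ∑ j, d j := by
  have hB : Matrix.PosSemidef (W * Matrix.diagonal d * Wᵀ) := by
    have := (Matrix.posSemidef_diagonal_iff.mpr hd).mul_mul_conjTranspose_same W
    simpa [Matrix.conjTranspose_eq_transpose_of_trivial] using this
  have hsq : (W * Matrix.diagonal d * Wᵀ) ^ 2 = A := by
    rw [pow_two, hAeq]
    calc W * Matrix.diagonal d * Wᵀ * (W * Matrix.diagonal d * Wᵀ)
        = W * Matrix.diagonal d * (Wᵀ * W) * Matrix.diagonal d * Wᵀ := by
          simp only [Matrix.mul_assoc]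
      _ = W * (Matrix.diagonal d * Matrix.diagonal d) * Wᵀ := by
          rw [hW]; simp only [Matrix.mul_assoc, Matrix.one_mul]
      _ = W * Matrix.diagonal (fun j => d j ^ 2) * Wᵀ := by
          rw [Matrix.diagonal_mul_diagonal]; ring_nf
  set E : Matrix (Fin n) (Fin n) ℝ := (hA.1.eigenvectorUnitary : Matrix (Fin n) (Fin n) ℝ)
    with hE_def
  have hE : star E * E = 1 := Matrix.mem_unitaryGroup_iff'.mp hA.1.eigenvectorUnitary.2
  have hB1 : Matrix.PosSemidef
      (E * diagonal ((↑) ∘ (fun x => √x) ∘ hA.1.eigenvalues) * star E) := by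
    have := (Matrix.posSemidef_diagonal_iff.mpr
      (fun j => Real.sqrt_nonneg (hA.1.eigenvalues j))).mul_mul_conjTranspose_same E
    simpa [Matrix.star_eq_conjTranspose, Function.comp_def] using this
  have hsq1 : (E * diagonal ((↑) ∘ (fun x => √x) ∘ hA.1.eigenvalues) * star E) *
      (E * diagonal ((↑) ∘ (fun x => √x) ∘ hA.1.eigenvalues) * star E) = A := by
    conv_rhs => rw [hA.1.spectral_theorem]
    rw [Unitary.conjStarAlgAut_apply, ← hE_def]
    calc (E * diagonal ((↑) ∘ (fun x => √x) ∘ hA.1.eigenvalues) * star E) *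
        (E * diagonal ((↑) ∘ (fun x => √x) ∘ hA.1.eigenvalues) * star E)
        = E * (diagonal ((↑) ∘ (fun x => √x) ∘ hA.1.eigenvalues) * (star E * E) *
          diagonal ((↑) ∘ (fun x => √x) ∘ hA.1.eigenvalues)) * star E := by
          simp only [Matrix.mul_assoc]
      _ = _ := by
          rw [hE, Matrix.mul_one, Matrix.diagonal_mul_diagonal]
          have hev : ∀ j, √(hA.1.eigenvalues j) * √(hA.1.eigenvalues j) = hA.1.eigenvalues j :=
            fun j => Real.mul_self_sqrt (hA.eigenvalues_nonneg j)
          simp [Function.comp_def, hev]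
  have heq : E * diagonal ((↑) ∘ (fun x => √x) ∘ hA.1.eigenvalues) * star E
      = W * Matrix.diagonal d * Wᵀ := by
    open scoped MatrixOrder in
    rw [← CFC.sqrt_unique (a := A) hsq1 hB1.nonneg,
      ← CFC.sqrt_unique (a := A) (by rw [← pow_two]; exact hsq) hB.nonneg]
  rw [heq, Matrix.trace_mul_comm, ← Matrix.mul_assoc, hW, Matrix.one_mul,
    Matrix.trace_diagonal]

/-- Cauchy–Schwarz bound for the partial-isometry matrix -/
lemma cs_bound {m n r : ℕ} (hrm : r ≤ m) (hrn : r ≤ n)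
    (U : Matrix (Fin m) (Fin m) ℝ) (V : Matrix (Fin n) (Fin n) ℝ)
    (hU2 : U * Uᵀ = 1) (hV2 : V * Vᵀ = 1) (p : Fin m → ℝ) (q : Fin n → ℝ) :
    ∑ l : Fin r, (∑ i, U i (Fin.castLE hrm l) * p i) * (∑ j, V j (Fin.castLE hrn l) * q j)
      ≤ Real.sqrt (∑ i, p i ^ 2) * Real.sqrt (∑ j, q j ^ 2) := by
  set a : Fin r → ℝ := fun l => ∑ i, U i (Fin.castLE hrm l) * p i with ha
  set b : Fin r → ℝ := fun l => ∑ j, V j (Fin.castLE hrn l) * q j with hb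
  have key : ∀ {N : ℕ} (W : Matrix (Fin N) (Fin N) ℝ), W * Wᵀ = 1 → ∀ (p : Fin N → ℝ),
      ∑ c : Fin N, (∑ i, W i c * p i) ^ 2 = ∑ i, p i ^ 2 := by
    intro N W hW p
    have expand : ∀ c : Fin N, (∑ i, W i c * p i) ^ 2
        = ∑ i, ∑ i', (W i c * W i' c) * (p i * p i') := by
      intro c
      rw [pow_two, Finset.sum_mul_sum]
      apply Finset.sum_congr rfl; intro i _; apply Finset.sum_congr rfl; intro i' _; ring
    calc ∑ c : Fin N, (∑ i, W i c * p i) ^ 2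
        = ∑ i, ∑ i', (∑ c, W i c * W i' c) * (p i * p i') := by
          simp_rw [expand]
          rw [Finset.sum_comm]
          apply Finset.sum_congr rfl; intro i _
          rw [Finset.sum_comm]
          apply Finset.sum_congr rfl; intro i' _
          rw [Finset.sum_mul]
      _ = ∑ i, ∑ i', (if i = i' then (1:ℝ) else 0) * (p i * p i') := by
          apply Finset.sum_congr rfl; intro i _; apply Finset.sum_congr rfl; intro i' _
          congr 1
          have := congrFun (congrFun hW i) i'
          simpa [Matrix.mul_apply, Matrix.one_apply] using this
      _ = ∑ i, p i ^ 2 := by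
          simp [ite_mul, Finset.sum_ite_eq, pow_two]
  have subsum : ∀ {N : ℕ} (h : r ≤ N) (f : Fin N → ℝ), (∀ c, 0 ≤ f c) →
      ∑ l : Fin r, f (Fin.castLE h l) ≤ ∑ c, f c := by
    intro N h f hf
    have : ∑ l : Fin r, f (Fin.castLE h l) = ∑ c ∈ Finset.univ.map (Fin.castLEEmb h), f c := by
      rw [Finset.sum_map]; rfl
    rw [this]
    exact Finset.sum_le_sum_of_subset_of_nonneg (Finset.subset_univ _) (fun c _ _ => hf c)
  have hA2 : ∑ l, a l ^ 2 ≤ ∑ i, p i ^ 2 := by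
    rw [← key U hU2 p]
    exact subsum hrm (fun c => (∑ i, U i c * p i) ^ 2) (fun c => sq_nonneg _)
  have hB2 : ∑ l, b l ^ 2 ≤ ∑ j, q j ^ 2 := by
    rw [← key V hV2 q]
    exact subsum hrn (fun c => (∑ j, V j c * q j) ^ 2) (fun c => sq_nonneg _)
  have hcs : (∑ l, a l * b l) ^ 2 ≤ (∑ l, a l ^ 2) * (∑ l, b l ^ 2) :=
    Finset.sum_mul_sq_le_sq_mul_sq _ _ _
  have h1 : ∑ l, a l * b l ≤ Real.sqrt ((∑ l, a l ^ 2) * (∑ l, b l ^ 2)) := by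
    calc ∑ l, a l * b l ≤ |∑ l, a l * b l| := le_abs_self _
      _ = Real.sqrt ((∑ l, a l * b l) ^ 2) := (Real.sqrt_sq_eq_abs _).symm
      _ ≤ _ := Real.sqrt_le_sqrt hcs
  calc ∑ l, a l * b l ≤ Real.sqrt ((∑ l, a l ^ 2) * (∑ l, b l ^ 2)) := h1
    _ ≤ Real.sqrt ((∑ i, p i ^ 2) * (∑ j, q j ^ 2)) := by
        apply Real.sqrt_le_sqrt
        exact mul_le_mul hA2 hB2 (Finset.sum_nonneg fun l _ => sq_nonneg _)
          (Finset.sum_nonneg fun i _ => sq_nonneg _)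
    _ = Real.sqrt (∑ i, p i ^ 2) * Real.sqrt (∑ j, q j ^ 2) :=
        Real.sqrt_mul (Finset.sum_nonneg fun i _ => sq_nonneg _) _

lemma rearr {m n N : ℕ} (f : Fin m → ℝ) (g : Fin n → ℝ)
    (p : Matrix (Fin m) (Fin N) ℝ) (q : Matrix (Fin n) (Fin N) ℝ) :
    ∑ i, ∑ j, f i * g j * (∑ k, p i k * q j k)
      = ∑ k : Fin N, (∑ i, f i * p i k) * (∑ j, g j * q j k) := by
  calc ∑ i, ∑ j, f i * g j * (∑ k, p i k * q j k)
      = ∑ i, ∑ j, ∑ k, (f i * p i k) * (g j * q j k) := by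
        refine Finset.sum_congr rfl fun i _ => Finset.sum_congr rfl fun j _ => ?_
        rw [Finset.mul_sum]
        exact Finset.sum_congr rfl fun k _ => by ring
    _ = ∑ i, ∑ k, ∑ j, (f i * p i k) * (g j * q j k) :=
        Finset.sum_congr rfl fun i _ => Finset.sum_comm
    _ = ∑ k, ∑ i, ∑ j, (f i * p i k) * (g j * q j k) := Finset.sum_comm
    _ = ∑ k : Fin N, (∑ i, f i * p i k) * (∑ j, g j * q j k) := by
        refine Finset.sum_congr rfl fun k _ => ?_
        rw [Finset.sum_mul_sum]

lemma col_collapse {N K : ℕ} (W : Matrix (Fin N) (Fin N) ℝ) (hW : Wᵀ * W = 1)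
    (M : Matrix (Fin N) (Fin K) ℝ) (c : Fin N) (k : Fin K) :
    ∑ i, W i c * (W * M) i k = M c k := by
  have h : ∑ i, W i c * (W * M) i k = (Wᵀ * (W * M)) c k := by
    simp [Matrix.mul_apply]
  rw [h, ← Matrix.mul_assoc, hW, Matrix.one_mul]

lemma trace_G_mul {m n r : ℕ} (hrm : r ≤ m) (hrn : r ≤ n)
    (U : Matrix (Fin m) (Fin m) ℝ) (V : Matrix (Fin n) (Fin n) ℝ)
    (Z : Matrix (Fin m) (Fin n) ℝ) :
    Matrix.trace
        ((Matrix.of fun (i : Fin m) (j : Fin n) =>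
            ∑ l : Fin r, U i (Fin.castLE hrm l) * V j (Fin.castLE hrn l))ᵀ * Z)
      = ∑ l : Fin r, ∑ i, ∑ j,
          U i (Fin.castLE hrm l) * V j (Fin.castLE hrn l) * Z i j := by
  simp only [Matrix.trace, Matrix.diag, Matrix.mul_apply, Matrix.transpose_apply,
    Matrix.of_apply]
  simp_rw [Finset.sum_mul]
  calc ∑ j, ∑ i, ∑ l : Fin r, U i (Fin.castLE hrm l) * V j (Fin.castLE hrn l) * Z i j
      = ∑ i, ∑ j, ∑ l : Fin r, U i (Fin.castLE hrm l) * V j (Fin.castLE hrn l) * Z i j :=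
        Finset.sum_comm
    _ = ∑ i, ∑ l : Fin r, ∑ j, U i (Fin.castLE hrm l) * V j (Fin.castLE hrn l) * Z i j :=
        Finset.sum_congr rfl fun i _ => Finset.sum_comm
    _ = ∑ l : Fin r, ∑ i, ∑ j, U i (Fin.castLE hrm l) * V j (Fin.castLE hrn l) * Z i j :=
        Finset.sum_comm

/-- Subgradient of the nuclear norm: if `X = U S Vᵀ` is a singular value decomposition
(`U`, `V` orthogonal, `S` diagonal with nonnegative nonincreasing diagonal), `r` is the
number of nonzero singular values, and `Ũ`, `Ṽ` consist of the first `r` columns of `U`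
and `V`, then `Ũ Ṽᵀ` is a subgradient of the nuclear norm at `X`:
`‖Y‖₊ ≥ ‖X‖₊ + ⟨Ũ Ṽᵀ, Y - X⟩` for all `Y`, where `⟨A, B⟩ = trace (Aᵀ B)`. -/
theorem nuclearNorm_subgradient {m n r : ℕ}
    (X : Matrix (Fin m) (Fin n) ℝ)
    (U : Matrix (Fin m) (Fin m) ℝ) (V : Matrix (Fin n) (Fin n) ℝ)
    (S : Matrix (Fin m) (Fin n) ℝ)
    (hU : Uᵀ * U = 1 ∧ U * Uᵀ = 1)
    (hV : Vᵀ * V = 1 ∧ V * Vᵀ = 1)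
    (hSdiag : ∀ (i : Fin m) (j : Fin n), (i : ℕ) ≠ (j : ℕ) → S i j = 0)
    (hSnonneg : ∀ (i : Fin m) (j : Fin n), 0 ≤ S i j)
    (hSorder : ∀ (i j : Fin m) (hi : (i : ℕ) < n) (hj : (j : ℕ) < n),
      i ≤ j → S j ⟨(j : ℕ), hj⟩ ≤ S i ⟨(i : ℕ), hi⟩)
    (hX : X = U * S * Vᵀ)
    (hrm : r ≤ m) (hrn : r ≤ n)
    (hr : ∀ (i : Fin m) (hi : (i : ℕ) < n), S i ⟨(i : ℕ), hi⟩ ≠ 0 ↔ (i : ℕ) < r) :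
    ∀ Y : Matrix (Fin m) (Fin n) ℝ,
      nuclearNorm X +
        Matrix.trace
          ((Matrix.of fun (i : Fin m) (j : Fin n) =>
              ∑ l : Fin r, U i (Fin.castLE hrm l) * V j (Fin.castLE hrn l))ᵀ * (Y - X)) ≤
      nuclearNorm Y := by
  intro Y
  -- the singular values of X, as a function on column indices
  set d : Fin n → ℝ := fun j => if h : (j : ℕ) < m then S ⟨(j : ℕ), h⟩ j else 0 with hd_def
  have hd_nonneg : ∀ j, 0 ≤ d j := by
    intro j; by_cases h : (j : ℕ) < m <;> simp [hd_def, h, hSnonneg]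
  -- ⟨G, X⟩ = ∑ l, S l l
  have htrX : Matrix.trace
      ((Matrix.of fun (i : Fin m) (j : Fin n) =>
          ∑ l : Fin r, U i (Fin.castLE hrm l) * V j (Fin.castLE hrn l))ᵀ * X)
      = ∑ l : Fin r, S (Fin.castLE hrm l) (Fin.castLE hrn l) := by
    rw [trace_G_mul hrm hrn]
    refine Finset.sum_congr rfl fun l _ => ?_
    have hXij : ∀ i j, X i j = ∑ b, (U * S) i b * V j b := by
      intro i j; rw [hX]; simp [Matrix.mul_apply]
    simp_rw [hXij]
    rw [rearr (fun i => U i (Fin.castLE hrm l)) (fun j => V j (Fin.castLE hrn l)) (U * S) V]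
    have h1 : ∀ b, ∑ i, U i (Fin.castLE hrm l) * (U * S) i b = S (Fin.castLE hrm l) b :=
      fun b => col_collapse U hU.1 S _ b
    have h2 : ∀ b, ∑ j, V j (Fin.castLE hrn l) * V j b
        = if (Fin.castLE hrn l) = b then (1:ℝ) else 0 := by
      intro b
      have h : ∑ j, V j (Fin.castLE hrn l) * V j b = (Vᵀ * V) (Fin.castLE hrn l) b := by
        simp [Matrix.mul_apply]
      rw [h, hV.1, Matrix.one_apply]
    simp_rw [h1, h2]
    simp
  -- nuclear norm of X
  have hStS : Sᵀ * S = Matrix.diagonal (fun j => d j ^ 2) := by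
    ext j k
    by_cases hjk : j = k
    · subst hjk
      rw [Matrix.diagonal_apply_eq]
      simp only [Matrix.mul_apply, Matrix.transpose_apply]
      by_cases h : (j : ℕ) < m
      · rw [Finset.sum_eq_single (⟨(j : ℕ), h⟩ : Fin m)]
        · simp [hd_def, h, pow_two]
        · intro i _ hi
          have : (i : ℕ) ≠ (j : ℕ) := fun hc => hi (Fin.ext hc)
          rw [hSdiag i j this, zero_mul]
        · simp
      · rw [Finset.sum_eq_zero, hd_def]
        · simp [h]
        · intro i _
          have : (i : ℕ) ≠ (j : ℕ) := fun hc => h (hc ▸ i.2)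
          rw [hSdiag i j this, zero_mul]
    · rw [Matrix.diagonal_apply_ne _ hjk]
      simp only [Matrix.mul_apply, Matrix.transpose_apply]
      apply Finset.sum_eq_zero
      intro i _
      by_cases hij : (i : ℕ) = (j : ℕ)
      · have : (i : ℕ) ≠ (k : ℕ) := fun hc => hjk (Fin.ext (hij ▸ hc : (j:ℕ) = (k:ℕ)))
        rw [hSdiag i k this, mul_zero]
      · rw [hSdiag i j hij, zero_mul]
  have hXtX : Xᴴ * X = V * Matrix.diagonal (fun j => d j ^ 2) * Vᵀ := by
    rw [Matrix.conjTranspose_eq_transpose_of_trivial, hX]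
    rw [Matrix.transpose_mul, Matrix.transpose_mul, Matrix.transpose_transpose]
    calc Vᵀᵀ * (Sᵀ * Uᵀ) * (U * S * Vᵀ)
        = V * (Sᵀ * (Uᵀ * U) * S) * Vᵀ := by
          rw [Matrix.transpose_transpose]; simp only [Matrix.mul_assoc]
      _ = V * (Sᵀ * S) * Vᵀ := by rw [hU.1]; simp only [Matrix.mul_assoc, Matrix.one_mul]
      _ = V * Matrix.diagonal (fun j => d j ^ 2) * Vᵀ := by rw [hStS]
  have hnnX : nuclearNorm X = ∑ j, d j := by
    unfold nuclearNorm
    exact traceSqrt_of_decomp (Matrix.posSemidef_conjTranspose_mul_self X) V hV.1 d hd_nonneg hXtX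
  -- the sum of d equals the sum over the first r indices
  have hdr : ∀ j : Fin n, ¬ ((j : ℕ) < r) → d j = 0 := by
    intro j hj
    by_cases h : (j : ℕ) < m
    · have hjn : ((⟨(j : ℕ), h⟩ : Fin m) : ℕ) < n := j.2
      have := hr ⟨(j : ℕ), h⟩ hjn
      have heq : (⟨((⟨(j : ℕ), h⟩ : Fin m) : ℕ), hjn⟩ : Fin n) = j := Fin.ext rfl
      rw [heq] at this
      simp only [hd_def]
      rw [dif_pos h]
      by_contra hne
      exact hj (this.mp hne)
    · simp [hd_def, h]
  have hsum_d : ∑ j, d j = ∑ l : Fin r, S (Fin.castLE hrm l) (Fin.castLE hrn l) := by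
    have hmem : ∀ j : Fin n, j ∈ Finset.univ.map (Fin.castLEEmb hrn) ↔ (j : ℕ) < r := by
      intro j
      simp only [Finset.mem_map, Finset.mem_univ, true_and]
      constructor
      · rintro ⟨l, hl⟩; rw [← hl]; exact l.2
      · intro h; exact ⟨⟨(j : ℕ), h⟩, Fin.ext rfl⟩
    have h1 : ∑ j, d j = ∑ j ∈ Finset.univ.map (Fin.castLEEmb hrn), d j := by
      symm
      apply Finset.sum_subset (Finset.subset_univ _)
      intro j _ hj
      exact hdr j (fun hc => hj ((hmem j).mpr hc))
    rw [h1, Finset.sum_map]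
    refine Finset.sum_congr rfl fun l _ => ?_
    have hlm : ((Fin.castLE hrn l : Fin n) : ℕ) < m := lt_of_lt_of_le l.2 hrm
    simp only [hd_def, Fin.castLEEmb_apply]
    rw [dif_pos hlm]
    congr 1
  -- the spectral decomposition of Yᵀ Y
  set hH := Matrix.posSemidef_conjTranspose_mul_self Y with hH_def
  set W : Matrix (Fin n) (Fin n) ℝ := (Matrix.IsHermitian.eigenvectorUnitary hH.1 : Matrix (Fin n) (Fin n) ℝ) with hW_def
  set lam : Fin n → ℝ := hH.1.eigenvalues with hlam_def
  have hlam_nonneg : ∀ k, 0 ≤ lam k := fun k => hH.eigenvalues_nonneg k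
  have hWmem := (Matrix.IsHermitian.eigenvectorUnitary hH.1).2
  have hstar : (star W : Matrix (Fin n) (Fin n) ℝ) = Wᵀ := by
    rw [Matrix.star_eq_conjTranspose, Matrix.conjTranspose_eq_transpose_of_trivial]
  have hW1 : Wᵀ * W = 1 := by
    have h := Matrix.mem_unitaryGroup_iff'.mp hWmem
    calc Wᵀ * W = star W * W := by rw [hstar]
      _ = 1 := h
  have hW2 : W * Wᵀ = 1 := by
    have h := Matrix.mem_unitaryGroup_iff.mp hWmem
    calc W * Wᵀ = W * star W := by rw [hstar]
      _ = 1 := h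
  have harg2 : (fun k => Real.sqrt (lam k) ^ 2) = lam := by
    funext k; exact Real.sq_sqrt (hlam_nonneg k)
  have harg1 : (RCLike.ofReal ∘ lam : Fin n → ℝ) = lam := by
    funext k; simp
  have hspec : Yᴴ * Y = W * Matrix.diagonal (fun k => Real.sqrt (lam k) ^ 2) * Wᵀ := by
    have h := hH.1.spectral_theorem
    rw [h, Unitary.conjStarAlgAut_apply, ← hW_def, hstar, harg1, harg2]
  have hnnY : nuclearNorm Y = ∑ k, Real.sqrt (lam k) := by
    unfold nuclearNorm
    exact traceSqrt_of_decomp (Matrix.posSemidef_conjTranspose_mul_self Y) W hW1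
      (fun k => Real.sqrt (lam k)) (fun k => Real.sqrt_nonneg _) hspec
  -- bound on ⟨G, Y⟩
  set P : Matrix (Fin m) (Fin n) ℝ := Y * W with hP_def
  have hYPW : Y = P * Wᵀ := by rw [hP_def, Matrix.mul_assoc, hW2, Matrix.mul_one]
  have hPtP : Pᵀ * P = Matrix.diagonal lam := by
    rw [hP_def, Matrix.transpose_mul]
    calc Wᵀ * Yᵀ * (Y * W) = Wᵀ * (Yᵀ * Y) * W := by simp only [Matrix.mul_assoc]
      _ = Wᵀ * (W * Matrix.diagonal (fun k => Real.sqrt (lam k) ^ 2) * Wᵀ) * W := by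
          rw [← hspec, Matrix.conjTranspose_eq_transpose_of_trivial]
      _ = (Wᵀ * W) * Matrix.diagonal (fun k => Real.sqrt (lam k) ^ 2) * (Wᵀ * W) := by
          simp only [Matrix.mul_assoc]
      _ = Matrix.diagonal lam := by
          rw [hW1, Matrix.one_mul, Matrix.mul_one, harg2]
  have hPcol : ∀ k, ∑ i, P i k ^ 2 = lam k := by
    intro k
    have h : (Pᵀ * P) k k = ∑ i, P i k ^ 2 := by
      simp [Matrix.mul_apply, pow_two]
    rw [← h, hPtP, Matrix.diagonal_apply_eq]
  have hWcol : ∀ k, ∑ j, W j k ^ 2 = 1 := by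
    intro k
    have h : (Wᵀ * W) k k = ∑ j, W j k ^ 2 := by
      simp [Matrix.mul_apply, pow_two]
    rw [← h, hW1, Matrix.one_apply_eq]
  have htrY : Matrix.trace
      ((Matrix.of fun (i : Fin m) (j : Fin n) =>
          ∑ l : Fin r, U i (Fin.castLE hrm l) * V j (Fin.castLE hrn l))ᵀ * Y)
      ≤ ∑ k, Real.sqrt (lam k) := by
    rw [trace_G_mul hrm hrn]
    have hYij : ∀ i j, Y i j = ∑ k, P i k * W j k := by
      intro i j; rw [hYPW]; simp [Matrix.mul_apply]
    calc ∑ l : Fin r, ∑ i, ∑ j, U i (Fin.castLE hrm l) * V j (Fin.castLE hrn l) * Y i j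
        = ∑ l : Fin r, ∑ k, (∑ i, U i (Fin.castLE hrm l) * P i k)
            * (∑ j, V j (Fin.castLE hrn l) * W j k) := by
          refine Finset.sum_congr rfl fun l _ => ?_
          simp_rw [hYij]
          exact rearr (fun i => U i (Fin.castLE hrm l)) (fun j => V j (Fin.castLE hrn l)) P W
      _ = ∑ k, ∑ l : Fin r, (∑ i, U i (Fin.castLE hrm l) * P i k)
            * (∑ j, V j (Fin.castLE hrn l) * W j k) := Finset.sum_comm
      _ ≤ ∑ k, Real.sqrt (lam k) := by
          refine Finset.sum_le_sum fun k _ => ?_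
          calc ∑ l : Fin r, (∑ i, U i (Fin.castLE hrm l) * P i k)
                * (∑ j, V j (Fin.castLE hrn l) * W j k)
              ≤ Real.sqrt (∑ i, P i k ^ 2) * Real.sqrt (∑ j, W j k ^ 2) :=
                cs_bound hrm hrn U V hU.2 hV.2 (fun i => P i k) (fun j => W j k)
            _ = Real.sqrt (lam k) := by rw [hPcol k, hWcol k, Real.sqrt_one, mul_one]
  -- put everything together
  have hsplit : Matrix.trace
      ((Matrix.of fun (i : Fin m) (j : Fin n) =>
          ∑ l : Fin r, U i (Fin.castLE hrm l) * V j (Fin.castLE hrn l))ᵀ * (Y - X))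
      = Matrix.trace
        ((Matrix.of fun (i : Fin m) (j : Fin n) =>
            ∑ l : Fin r, U i (Fin.castLE hrm l) * V j (Fin.castLE hrn l))ᵀ * Y)
      - Matrix.trace
        ((Matrix.of fun (i : Fin m) (j : Fin n) =>
            ∑ l : Fin r, U i (Fin.castLE hrm l) * V j (Fin.castLE hrn l))ᵀ * X) := by
    rw [Matrix.mul_sub, Matrix.trace_sub]
  rw [hsplit, htrX, hnnX, hsum_d, hnnY]
  linarith [htrY]
end
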